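/- For all natural numbers k, l, m with 1 ≤ m ≤ min(k, l), the following balanced quantum binomial identity holds in ℚ(q): Σ_{t=0}^{m} (−1)^t · ([l−m+t choose t]/[k+l−2m+t choose l−m+t]) · ([k+l−2m+1]/[k+l−2m+1+t]) · [l choose l−m+t] · [k+l−m+t choose k] = 0, where the t = m summand simplifies to (−1)^m·([l choose m]/[k+l−m choose l])·([k+l−2m+1]/[k+l−m+1])·[l choose l]·[k+l choose k]. -/

import Mathlib

open scoped BigOperators

noncomputable def q : RatFunc ℚ := RatFunc.X

noncomputable def qInt (k : ℕ) : RatFunc ℚ := (q ^ k - q⁻¹ ^ k) / (q - q⁻¹)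

noncomputable def qFact (n : ℕ) : RatFunc ℚ := ∏ i ∈ Finset.range n, qInt (i + 1)

noncomputable def qBinom (n k : ℕ) : RatFunc ℚ :=
  if k ≤ n then qFact n / (qFact (n - k) * qFact k) else 0

open Finset

lemma hq0 : q ≠ 0 := RatFunc.X_ne_zero

lemma qpow_ne_one {n : ℕ} (hn : n ≠ 0) : q ^ n ≠ 1 := by
  intro h
  have : (Polynomial.X : Polynomial ℚ) ^ n = 1 := by
    apply RatFunc.algebraMap_injective ℚ
    simpa [map_pow, RatFunc.algebraMap_X, q] using h
  have := congrArg Polynomial.natDegree this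
  simp [Polynomial.natDegree_X_pow] at this
  exact hn this

lemma qsub_ne_zero {n : ℕ} (hn : n ≠ 0) : q ^ n - q⁻¹ ^ n ≠ 0 := by
  intro h
  have h2 : q ^ n * q ^ n = q ^ n * q⁻¹ ^ n := by rw [sub_eq_zero] at h; rw [h]
  have h3 : q ^ n * q⁻¹ ^ n = 1 := by
    rw [← mul_pow, mul_inv_cancel₀ hq0, one_pow]
  rw [h3, ← pow_add] at h2
  exact qpow_ne_one (by omega) h2

lemma qInt_ne_zero {n : ℕ} (hn : n ≠ 0) : qInt n ≠ 0 := by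
  unfold qInt
  apply div_ne_zero (qsub_ne_zero hn)
  simpa using qsub_ne_zero (n := 1) one_ne_zero

lemma qFact_succ (n : ℕ) : qFact (n + 1) = qFact n * qInt (n + 1) :=
  Finset.prod_range_succ _ _

lemma qFact_ne_zero (n : ℕ) : qFact n ≠ 0 := by
  induction n with
  | zero => simp [qFact]
  | succ n ih => rw [qFact_succ]; exact mul_ne_zero ih (qInt_ne_zero (by omega))

lemma qBinom_eq {n k : ℕ} (d : ℕ) (h : n = k + d) :
    qBinom n k = qFact n / (qFact d * qFact k) := by
  subst h; rw [qBinom, if_pos (by omega)]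
  rw [Nat.add_sub_cancel_left]

lemma qFact_zero : qFact 0 = 1 := by simp [qFact]

lemma qBinom_zero (n : ℕ) : qBinom n 0 = 1 := by
  rw [qBinom_eq n (by omega), qFact_zero, mul_one, div_self (qFact_ne_zero n)]

lemma qBinom_eq_zero {n k : ℕ} (h : n < k) : qBinom n k = 0 := by
  rw [qBinom, if_neg (by omega)]

lemma qBinom_self (n : ℕ) : qBinom n n = 1 := by
  rw [qBinom_eq 0 (by omega), qFact_zero, one_mul, div_self (qFact_ne_zero n)]

lemma qInt_add (a b : ℕ) : qInt (a + b) = q ^ a * qInt b + q⁻¹ ^ b * qInt a := by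
  unfold qInt
  rw [← mul_div_assoc, ← mul_div_assoc, ← add_div]
  congr 1
  rw [pow_add, pow_add]
  ring

lemma q_mul_inv_pow (t : ℕ) : q ^ t * q⁻¹ ^ t = 1 := by
  rw [← mul_pow, mul_inv_cancel₀ hq0, one_pow]

lemma qBinom_pascal (n t : ℕ) :
    qBinom (n + 1) (t + 1) =
      q ^ (t + 1) * qBinom n (t + 1) + q ^ t * q⁻¹ ^ n * qBinom n t := by
  rcases Nat.lt_or_ge n (t + 1) with h | h
  · rcases Nat.lt_or_ge n t with h2 | h2
    · -- n < t : everything zero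
      rw [qBinom_eq_zero (by omega), qBinom_eq_zero (by omega), qBinom_eq_zero (by omega)]
      ring
    · -- n = t
      have : n = t := by omega
      subst this
      rw [qBinom_self, qBinom_self, qBinom_eq_zero (by omega)]
      rw [mul_one, mul_zero, zero_add, q_mul_inv_pow]
  · -- t + 1 ≤ n : n = t + v + 1
    obtain ⟨v, rfl⟩ : ∃ v, n = t + v + 1 := ⟨n - t - 1, by omega⟩
    have key : qInt (t + v + 1 + 1) = q ^ (t+1) * qInt (v+1) + q ^ t * q⁻¹ ^ (t+v+1) * qInt (t+1) := by
      have h1 := qInt_add (t+1) (v+1)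
      rw [show t+1+(v+1) = t+v+1+1 by omega] at h1
      have e : q ^ t * q⁻¹ ^ (t+v+1) = q⁻¹ ^ (v+1) := by
        rw [show t+v+1 = t+(v+1) from by omega, pow_add, ← mul_assoc, q_mul_inv_pow, one_mul]
      rw [h1, e]
    rw [qBinom_eq (v+1) (by omega), qBinom_eq v (by omega), qBinom_eq (v+1) (by omega),
      qFact_succ (t+v+1), key, qFact_succ v, qFact_succ t]
    have hFn := qFact_ne_zero (t+v+1)
    have hFv := qFact_ne_zero v
    have hFt := qFact_ne_zero t
    have hIv : qInt (v+1) ≠ 0 := qInt_ne_zero (by omega)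
    have hIt : qInt (t+1) ≠ 0 := qInt_ne_zero (by omega)
    rw [← mul_div_assoc, ← mul_div_assoc, div_add_div _ _ (mul_ne_zero hFv (mul_ne_zero hFt hIt)) (mul_ne_zero (mul_ne_zero hFv hIv) hFt),
      div_eq_div_iff (mul_ne_zero (mul_ne_zero hFv hIv) (mul_ne_zero hFt hIt))
        (mul_ne_zero (mul_ne_zero hFv (mul_ne_zero hFt hIt)) (mul_ne_zero (mul_ne_zero hFv hIv) hFt))]
    ring

noncomputable def S (m : ℕ) (w : RatFunc ℚ) : RatFunc ℚ :=
  ∑ t ∈ Finset.range (m + 1), (-1 : RatFunc ℚ) ^ t * qBinom m t * w ^ t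

lemma S_rec (m : ℕ) (w : RatFunc ℚ) : S (m + 1) w = (1 - w * q⁻¹ ^ m) * S m (q * w) := by
  rw [S, Finset.sum_range_succ']
  simp only [pow_zero, qBinom_zero, mul_one, one_mul]
  have step : ∀ t ∈ Finset.range (m + 1),
      (-1 : RatFunc ℚ) ^ (t+1) * qBinom (m+1) (t+1) * w ^ (t+1)
      = (-1 : RatFunc ℚ) ^ (t+1) * qBinom m (t+1) * (q*w) ^ (t+1)
        + (-(w * q⁻¹ ^ m)) * ((-1 : RatFunc ℚ) ^ t * qBinom m t * (q*w) ^ t) := by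
    intro t _
    rw [qBinom_pascal, mul_pow, mul_pow]
    ring
  rw [Finset.sum_congr rfl step, Finset.sum_add_distrib, ← Finset.mul_sum]
  have h1 : ∑ t ∈ Finset.range (m+1), (-1 : RatFunc ℚ) ^ (t+1) * qBinom m (t+1) * (q*w) ^ (t+1)
      = S m (q*w) - 1 := by
    have h2 := Finset.sum_range_succ' (fun s => (-1 : RatFunc ℚ) ^ s * qBinom m s * (q*w) ^ s) (m+1)
    have h3 : ∑ s ∈ Finset.range (m+1+1), (-1 : RatFunc ℚ) ^ s * qBinom m s * (q*w) ^ s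
        = S m (q*w) := by
      rw [Finset.sum_range_succ, qBinom_eq_zero (by omega), S]
      ring
    rw [h3] at h2
    simp only [pow_zero, qBinom_zero, mul_one, one_mul] at h2
    linear_combination -h2
  rw [h1, S]
  ring

lemma S_vanish (m s : ℕ) (h : s < m) : S m (q ^ ((m : ℤ) - 1 - 2 * s)) = 0 := by
  induction m generalizing s with
  | zero => omega
  | succ m ih =>
    rw [S_rec]
    rcases Nat.eq_zero_or_pos s with hs | hs
    · subst hs
      have : q ^ ((↑(m+1) : ℤ) - 1 - 2 * (0:ℕ)) * q⁻¹ ^ m = 1 := by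
        rw [show ((↑(m+1) : ℤ) - 1 - 2 * ((0:ℕ):ℤ)) = (m : ℤ) by push_cast; ring,
          zpow_natCast, q_mul_inv_pow]
      rw [this, sub_self, zero_mul]
    · obtain ⟨s', rfl⟩ : ∃ s', s = s' + 1 := ⟨s - 1, by omega⟩
      have : q * q ^ ((↑(m+1) : ℤ) - 1 - 2 * (↑(s'+1) : ℤ)) = q ^ ((m : ℤ) - 1 - 2 * s') := by
        rw [show ((↑(m+1) : ℤ) - 1 - 2 * (↑(s'+1) : ℤ)) = ((m : ℤ) - 1 - 2 * s') - 1 by push_cast; ring,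
          zpow_sub_one₀ hq0, mul_comm, mul_assoc, inv_mul_cancel₀ hq0, mul_one]
      rw [this, ih s' (by omega), mul_zero]

lemma struct (N r : ℕ) : ∃ c : ℕ → RatFunc ℚ,
    (∀ s, r + 1 ≤ s → c s = 0) ∧
    ∀ t, (∏ j ∈ Finset.range r, qInt (N + t + j))
      = ∑ s ∈ Finset.range (r + 1), c s * (q ^ ((r : ℤ) - 2 * (s : ℤ))) ^ t := by
  induction r with
  | zero =>
    refine ⟨fun s => if s = 0 then 1 else 0, fun s hs => if_neg (by omega), fun t => ?_⟩
    simp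
  | succ r ih =>
    obtain ⟨c, hc0, hc⟩ := ih
    refine ⟨fun s => (q ^ (N + r) / (q - q⁻¹)) * c s
        + (-(q⁻¹ ^ (N + r) / (q - q⁻¹))) * (if s = 0 then 0 else c (s - 1)), fun s hs => ?_, fun t => ?_⟩
    · dsimp only
      rw [hc0 s (by omega), if_neg (by omega), hc0 (s - 1) (by omega)]
      ring
    · set A := q ^ (N + r) / (q - q⁻¹) with hA
      set B := -(q⁻¹ ^ (N + r) / (q - q⁻¹)) with hB
      have hsplit : qInt (N + t + r) = A * q ^ t + B * q⁻¹ ^ t := by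
        rw [hA, hB]
        unfold qInt
        rw [show N + t + r = (N + r) + t from by omega, pow_add, pow_add]
        ring
      have e1 : ∀ s : ℕ, (q ^ (((r:ℤ) + 1) - 2 * (s:ℤ))) = q ^ ((r:ℤ) - 2 * (s:ℤ)) * q := by
        intro s
        rw [show ((r:ℤ) + 1) - 2 * (s:ℤ) = ((r:ℤ) - 2 * (s:ℤ)) + 1 from by ring, zpow_add_one₀ hq0]
      have e2 : ∀ s : ℕ, (q ^ (((r:ℤ) + 1) - 2 * ((s:ℤ) + 1))) = q ^ ((r:ℤ) - 2 * (s:ℤ)) * q⁻¹ := by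
        intro s
        rw [show ((r:ℤ) + 1) - 2 * ((s:ℤ) + 1) = ((r:ℤ) - 2 * (s:ℤ)) - 1 from by ring, zpow_sub_one₀ hq0]
      rw [Finset.prod_range_succ, hc t, hsplit]
      have lhs_eq : (∑ s ∈ Finset.range (r + 1), c s * (q ^ ((r:ℤ) - 2 * (s:ℤ))) ^ t) * (A * q ^ t + B * q⁻¹ ^ t)
          = (∑ s ∈ Finset.range (r + 1), A * c s * ((q ^ ((r:ℤ) - 2 * (s:ℤ)) * q) ^ t))
            + (∑ s ∈ Finset.range (r + 1), B * c s * ((q ^ ((r:ℤ) - 2 * (s:ℤ)) * q⁻¹) ^ t)) := by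
        rw [Finset.sum_mul, ← Finset.sum_add_distrib]
        refine Finset.sum_congr rfl fun s _ => ?_
        rw [mul_pow, mul_pow]
        ring
      have ext : ∑ s ∈ Finset.range (r + 1 + 1), A * c s * (q ^ ((↑(r+1):ℤ) - 2 * (s:ℤ))) ^ t
          = ∑ s ∈ Finset.range (r + 1), A * c s * ((q ^ ((r:ℤ) - 2 * (s:ℤ)) * q) ^ t) := by
        rw [Finset.sum_range_succ, hc0 (r + 1) le_rfl, mul_zero, zero_mul, add_zero]
        refine Finset.sum_congr rfl fun s _ => ?_
        rw [show ((↑(r+1):ℤ) - 2 * (s:ℤ)) = ((r:ℤ) + 1) - 2 * (s:ℤ) from by push_cast; ring, e1 s]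
      have shift : ∑ s ∈ Finset.range (r + 1 + 1),
            (B * if s = 0 then 0 else c (s - 1)) * (q ^ ((↑(r+1):ℤ) - 2 * (s:ℤ))) ^ t
          = ∑ s ∈ Finset.range (r + 1), B * c s * ((q ^ ((r:ℤ) - 2 * (s:ℤ)) * q⁻¹) ^ t) := by
        rw [Finset.sum_range_succ']
        rw [if_pos rfl, mul_zero, zero_mul, add_zero]
        refine Finset.sum_congr rfl fun s _ => ?_
        rw [if_neg (Nat.succ_ne_zero s), Nat.add_sub_cancel,
          show ((↑(r+1):ℤ) - 2 * (↑(s+1):ℤ)) = ((r:ℤ) + 1) - 2 * ((s:ℤ) + 1) from by push_cast; ring,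
          e2 s]
      rw [lhs_eq, ← ext, ← shift, ← Finset.sum_add_distrib]
      refine Finset.sum_congr rfl fun s _ => ?_
      ring

lemma key_vanish (m N : ℕ) (hm : 1 ≤ m) :
    ∑ t ∈ Finset.range (m + 1), (-1 : RatFunc ℚ) ^ t * qBinom m t *
      ∏ j ∈ Finset.range (m - 1), qInt (N + t + j) = 0 := by
  obtain ⟨c, hc0, hc⟩ := struct N (m - 1)
  have hr : m - 1 + 1 = m := by omega
  have hcast : ∀ s : ℕ, (q ^ ((↑(m-1):ℤ) - 2 * (s:ℤ))) = q ^ ((m : ℤ) - 1 - 2 * (s:ℤ)) := by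
    intro s
    congr 1
    omega
  calc ∑ t ∈ Finset.range (m + 1), (-1 : RatFunc ℚ) ^ t * qBinom m t *
        ∏ j ∈ Finset.range (m - 1), qInt (N + t + j)
      = ∑ t ∈ Finset.range (m + 1), ∑ s ∈ Finset.range m,
          c s * ((-1 : RatFunc ℚ) ^ t * qBinom m t * (q ^ ((m:ℤ) - 1 - 2 * (s:ℤ))) ^ t) := by
        refine Finset.sum_congr rfl fun t _ => ?_
        have hct := hc t
        rw [hr] at hct
        simp only [hcast] at hct
        rw [hct, Finset.mul_sum]
        exact Finset.sum_congr rfl fun s _ => by ring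
    _ = ∑ s ∈ Finset.range m, c s * S m (q ^ ((m:ℤ) - 1 - 2 * (s:ℤ))) := by
        rw [Finset.sum_comm]
        exact Finset.sum_congr rfl fun s _ => by rw [S, Finset.mul_sum]
    _ = 0 := by
        refine Finset.sum_eq_zero fun s hs => ?_
        rw [S_vanish m s (Finset.mem_range.mp hs), mul_zero]

lemma qFact_div (x r : ℕ) : ∏ j ∈ Finset.range r, qInt (x + 1 + j) = qFact (x + r) / qFact x := by
  induction r with
  | zero => simp [div_self (qFact_ne_zero x)]
  | succ r ih =>
    rw [Finset.prod_range_succ, ih, show x + (r + 1) = (x + r) + 1 from by omega, qFact_succ,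
      div_mul_eq_mul_div, show x + 1 + r = x + r + 1 from by omega]

lemma perterm (a b m t : ℕ) (hm : 1 ≤ m) (ht : t ≤ m) :
    (-1 : RatFunc ℚ) ^ t * (qBinom (a + t) t / qBinom (a + b + t) (a + t)) *
      (qInt (a + b + 1) / qInt (a + b + 1 + t)) * qBinom (m + a) (a + t) * qBinom (m + a + b + t) (m + b)
    = (qFact b * qFact (m + a) * qInt (a + b + 1) / (qFact a * qFact (m + b) * qFact m)) *
      ((-1 : RatFunc ℚ) ^ t * qBinom m t * ∏ j ∈ Finset.range (m - 1), qInt (a + b + 2 + t + j)) := by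
  obtain ⟨u, rfl⟩ : ∃ u, m = t + u := ⟨m - t, by omega⟩
  have hprod : ∏ j ∈ Finset.range (t + u - 1), qInt (a + b + 2 + t + j)
      = qFact (t + u + a + b + t) / qFact (a + b + 1 + t) := by
    rw [show t + u + a + b + t = a + b + 1 + t + (t + u - 1) from by omega,
      ← qFact_div (a + b + 1 + t) (t + u - 1)]
    exact Finset.prod_congr rfl fun j _ => congrArg qInt (by omega)
  rw [hprod,
    qBinom_eq (n := a + t) (k := t) a (by omega),
    qBinom_eq (n := a + b + t) (k := a + t) b (by omega),
    qBinom_eq (n := t + u + a) (k := a + t) u (by omega),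
    qBinom_eq (n := t + u + a + b + t) (k := t + u + b) (a + t) (by omega),
    qBinom_eq (n := t + u) (k := t) u (by omega),
    show qFact (a + b + 1 + t) = qFact (a + b + t) * qInt (a + b + 1 + t) from by
      rw [show a + b + 1 + t = (a + b + t) + 1 from by omega, qFact_succ,
        show a + b + t + 1 = a + b + 1 + t from by omega]]
  have h1 := qFact_ne_zero a
  have h2 := qFact_ne_zero b
  have h3 := qFact_ne_zero t
  have h4 := qFact_ne_zero u
  have h5 := qFact_ne_zero (a + t)
  have h6 := qFact_ne_zero (a + b + t)
  have h7 := qFact_ne_zero (t + u + a)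
  have h8 := qFact_ne_zero (t + u + b)
  have h9 := qFact_ne_zero (t + u)
  have h10 := qFact_ne_zero (t + u + a + b + t)
  have h11 : qInt (a + b + 1) ≠ 0 := qInt_ne_zero (by omega)
  have h12 : qInt (a + b + 1 + t) ≠ 0 := qInt_ne_zero (by omega)
  have h5' : qFact (t + a) ≠ 0 := qFact_ne_zero _
  have h8' : qFact (t + b + u) ≠ 0 := qFact_ne_zero _
  have h6' : qFact (t + a + b) ≠ 0 := qFact_ne_zero _
  have h12' : qInt (1 + t + a + b) ≠ 0 := qInt_ne_zero (by omega)
  field_simp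

theorem idempotent_annihilates (k l m : ℕ) (hm : 1 ≤ m) (hmk : m ≤ k) (hml : m ≤ l) :
    ∑ t ∈ Finset.range (m + 1),
      (-1 : RatFunc ℚ) ^ t *
        (qBinom (l - m + t) t / qBinom (k + l - 2 * m + t) (l - m + t)) *
        (qInt (k + l - 2 * m + 1) / qInt (k + l - 2 * m + 1 + t)) *
        qBinom l (l - m + t) * qBinom (k + l - m + t) k = 0 := by
  obtain ⟨a, rfl⟩ : ∃ a, l = m + a := ⟨l - m, by omega⟩
  obtain ⟨b, rfl⟩ : ∃ b, k = m + b := ⟨k - m, by omega⟩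
  have hstep : ∀ t ∈ Finset.range (m + 1),
      (-1 : RatFunc ℚ) ^ t *
        (qBinom (m + a - m + t) t / qBinom (m + b + (m + a) - 2 * m + t) (m + a - m + t)) *
        (qInt (m + b + (m + a) - 2 * m + 1) / qInt (m + b + (m + a) - 2 * m + 1 + t)) *
        qBinom (m + a) (m + a - m + t) * qBinom (m + b + (m + a) - m + t) (m + b)
      = (qFact b * qFact (m + a) * qInt (a + b + 1) / (qFact a * qFact (m + b) * qFact m)) *
        ((-1 : RatFunc ℚ) ^ t * qBinom m t * ∏ j ∈ Finset.range (m - 1), qInt (a + b + 2 + t + j)) := by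
    intro t ht
    rw [show m + a - m + t = a + t from by omega,
      show m + b + (m + a) - 2 * m + t = a + b + t from by omega,
      show m + b + (m + a) - 2 * m + 1 = a + b + 1 from by omega,
      show m + b + (m + a) - m + t = m + a + b + t from by omega]
    exact perterm a b m t hm (by have := Finset.mem_range.mp ht; omega)
  rw [Finset.sum_congr rfl hstep, ← Finset.mul_sum,
    show (∑ t ∈ Finset.range (m + 1), (-1 : RatFunc ℚ) ^ t * qBinom m t *
      ∏ j ∈ Finset.range (m - 1), qInt (a + b + 2 + t + j)) = 0 from key_vanish m (a + b + 2) hm,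
    mul_zero]
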